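/- Let m, m₁ ∈ {0,…,N−1} with m > m₁, let k ∈ {0,…,C−1}, let τ = k₀·Δt for some integer k₀ with k·T_SC ≤ τ < k·T_SC + min{T_SC − t_{m₁,1}, t_{m,1}}, and set ν = 2·c̃₁·τ − k/Δt + (m − m₁)/T. Then for every i ∈ {0,…,C−k−1} and every t ∈ [t_{m₁,i} + τ, t_{m,i+k+1}), as well as for every t ∈ [t_{m₁,C−k} + τ, T), the cross-ambiguity integrand is the constant φ_m(t)·conj(φ_{m₁}(t−τ))·exp(−2πiνt) = exp(2πi·(c₂·(m² − m₁²) + (m₁/T)·τ − c̃₁·τ²)), independent of t and i; hence the cross-ambiguity function between the two chirp subcarriers has a pulse at (τ, 2·c̃₁·τ − k/Δt + δ_f), i.e., shifted along the Doppler dimension by exactly the frequency difference δ_f = (m − m₁)/T relative to the auto-ambiguity pulse locations. -/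
import Mathlib


open MeasureTheory Complex Real

noncomputable section

namespace AFDM

variable (N C : ℕ) (Δt : ℝ)

/-- Frame duration `T = N·Δt`. -/
def T : ℝ := N * Δt

/-- Chirp rate parameter `c̃₁ = C/(2·T·Δt)`. -/
def ctil : ℝ := C / (2 * T N Δt * Δt)

/-- Subchirp duration `T_SC = T/C`. -/
def TSC : ℝ := T N Δt / C

/-- Spectrum wrapping points `t_{m,q}`: `t_{m,0} = 0`, `t_{m,q} = q·T/C − m·Δt/C` for
`q = 1,…,C`, and `t_{m,C+1} = T`. -/
def tp (m q : ℕ) : ℝ :=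
  if q = 0 then 0 else if q ≤ C then q * T N Δt / C - m * Δt / C else T N Δt

/-- Wrapping index function `q_m(t)`: equals `q` on `[t_{m,q}, t_{m,q+1})` for `t ∈ [0,T)`. -/
def qm (m : ℕ) (t : ℝ) : ℤ :=
  (((Finset.range (C + 1)).filter (fun q => tp N C Δt m q ≤ t)).card : ℤ) - 1

/-- The `m`-th continuous-time AFDM chirp subcarrier with parameter `c₂`:
`φ_m(t) = exp(2πi(c₂·m² + c̃₁·t² + (m/T)·t − q_m(t)·t/Δt))` on `[0,T)`, `0` otherwise. -/
def phi (c₂ : ℝ) (m : ℕ) (t : ℝ) : ℂ :=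
  if 0 ≤ t ∧ t < T N Δt then
    Complex.exp (2 * Real.pi * Complex.I *
      ((c₂ * (m : ℝ) ^ 2 + ctil N C Δt * t ^ 2 + ((m : ℝ) / T N Δt) * t
        - (qm N C Δt m t : ℝ) * t / Δt : ℝ) : ℂ))
  else 0

/-- The aperiodic ambiguity function `A_{a,b}(τ,ν) = ∫ a(t)·conj(b(t−τ))·exp(−2πiνt) dt`. -/
def AF (a b : ℝ → ℂ) (τ ν : ℝ) : ℂ :=
  ∫ t : ℝ, a t * (starRingEnd ℂ) (b (t - τ)) *
    Complex.exp (-(2 * Real.pi * Complex.I * ((ν * t : ℝ) : ℂ)))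

/-- The integral indicator `I(c, t₁, t₂)`. -/
def Iind (c t₁ t₂ : ℝ) : ℂ :=
  if c ≠ 0 then
    (Complex.exp (2 * Real.pi * Complex.I * ((c * t₂ : ℝ) : ℂ))
      - Complex.exp (2 * Real.pi * Complex.I * ((c * t₁ : ℝ) : ℂ))) /
      (2 * Real.pi * Complex.I * ((c : ℝ) : ℂ))
  else ((t₂ - t₁ : ℝ) : ℂ)

lemma tp_zero (m : ℕ) : tp N C Δt m 0 = 0 := by simp [tp]

lemma tp_of {q : ℕ} (hq1 : 1 ≤ q) (hqC : q ≤ C) (m : ℕ) :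
    tp N C Δt m q = q * T N Δt / C - m * Δt / C := by
  have : q ≠ 0 := by omega
  simp [tp, this, hqC]

lemma tp_top (m : ℕ) : tp N C Δt m (C + 1) = T N Δt := by
  simp [tp]

lemma tp_mono {q q' : ℕ} (hT : 0 ≤ T N Δt) (hq1 : 1 ≤ q) (hqq : q ≤ q') (hqC : q' ≤ C)
    (m : ℕ) : tp N C Δt m q ≤ tp N C Δt m q' := by
  rw [tp_of N C Δt hq1 (hqq.trans hqC) m, tp_of N C Δt (hq1.trans hqq) hqC m]
  have h1 : (q : ℝ) * T N Δt ≤ q' * T N Δt := by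
    apply mul_le_mul_of_nonneg_right (by exact_mod_cast hqq) hT
  have hC0 : (0:ℝ) ≤ (C:ℝ) := by positivity
  gcongr

lemma tp_nonneg {m q : ℕ} (hC : 0 < C) (hT : 0 ≤ T N Δt)
    (hm : 0 ≤ T N Δt / C - m * Δt / C) (hq : q ≤ C) : 0 ≤ tp N C Δt m q := by
  rcases Nat.eq_zero_or_pos q with h | h
  · simp [h, tp_zero]
  · rw [tp_of N C Δt h hq]
    have h1 : T N Δt / C ≤ q * T N Δt / C := by
      rw [div_le_div_iff_of_pos_right]
      · have h1 : (1:ℝ) ≤ q := by exact_mod_cast h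
        nlinarith
      · exact_mod_cast hC
    linarith

lemma tp_le_T {m q : ℕ} (hC : 0 < C) (hT : 0 ≤ T N Δt) (hΔt : 0 ≤ Δt) (hq : q ≤ C) :
    tp N C Δt m q ≤ T N Δt := by
  rcases Nat.eq_zero_or_pos q with h | h
  · simp [h, tp_zero, hT]
  · rw [tp_of N C Δt h hq]
    have hC' : (0:ℝ) < C := by exact_mod_cast hC
    have h1 : (q:ℝ) * T N Δt / C ≤ T N Δt := by
      rw [div_le_iff₀ hC']
      have : (q:ℝ) ≤ C := by exact_mod_cast hq
      nlinarith
    have : 0 ≤ (m:ℝ) * Δt / C := by positivity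
    linarith

lemma qm_eq {m : ℕ} (hC : 0 < C) (hT : 0 ≤ T N Δt)
    (hm : 0 ≤ T N Δt / C - m * Δt / C) {j : ℕ} (hj : j ≤ C) {t : ℝ} (h0 : 0 ≤ t)
    (h1 : tp N C Δt m j ≤ t) (h2 : t < tp N C Δt m (j + 1)) :
    qm N C Δt m t = (j : ℤ) := by
  have hfilter : (Finset.range (C + 1)).filter (fun q => tp N C Δt m q ≤ t)
      = Finset.range (j + 1) := by
    ext q
    simp only [Finset.mem_filter, Finset.mem_range]
    constructor
    · rintro ⟨hqC, hle⟩
      by_contra h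
      push_neg at h
      have hq1 : 1 ≤ j + 1 := by omega
      have hqC' : q ≤ C := by omega
      have hmono := tp_mono N C Δt hT hq1 h hqC' m
      linarith
    · intro hq
      refine ⟨by omega, ?_⟩
      rcases Nat.eq_zero_or_pos q with h0q | h0q
      · simpa [h0q, tp_zero] using h0
      · have hqj : q ≤ j := by omega
        have hmono := tp_mono N C Δt hT h0q hqj hj m
        linarith
  unfold qm
  rw [hfilter, Finset.card_range]
  push_cast
  ring

lemma key (hΔt : 0 < Δt) (c₂ : ℝ) (m m₁ i k : ℕ) (k₀ : ℤ) (τ t ν : ℝ)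
    (hτ : τ = (k₀ : ℝ) * Δt)
    (hν : ν = 2 * ctil N C Δt * τ - (k : ℝ) / Δt + ((m : ℝ) - (m₁ : ℝ)) / T N Δt)
    (ht0 : 0 ≤ t) (htT : t < T N Δt) (hs0 : 0 ≤ t - τ) (hsT : t - τ < T N Δt)
    (hqm : qm N C Δt m t = (i : ℤ) + (k : ℤ)) (hqm₁ : qm N C Δt m₁ (t - τ) = (i : ℤ)) :
    phi N C Δt c₂ m t * (starRingEnd ℂ) (phi N C Δt c₂ m₁ (t - τ)) *
        Complex.exp (-(2 * Real.pi * Complex.I * ((ν * t : ℝ) : ℂ))) =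
      Complex.exp (2 * Real.pi * Complex.I *
        ((c₂ * ((m : ℝ) ^ 2 - (m₁ : ℝ) ^ 2) + ((m₁ : ℝ) / T N Δt) * τ
          - ctil N C Δt * τ ^ 2 : ℝ) : ℂ)) := by
  rw [phi, if_pos ⟨ht0, htT⟩, phi, if_pos ⟨hs0, hsT⟩, hqm, hqm₁]
  set X : ℝ := c₂ * (m : ℝ) ^ 2 + ctil N C Δt * t ^ 2 + ((m : ℝ) / T N Δt) * t
      - (((i : ℤ) + (k : ℤ) : ℤ) : ℝ) * t / Δt with hX
  set Y : ℝ := c₂ * (m₁ : ℝ) ^ 2 + ctil N C Δt * (t - τ) ^ 2 + ((m₁ : ℝ) / T N Δt) * (t - τ)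
      - (((i : ℤ) : ℤ) : ℝ) * (t - τ) / Δt with hY
  set D : ℝ := c₂ * ((m : ℝ) ^ 2 - (m₁ : ℝ) ^ 2) + ((m₁ : ℝ) / T N Δt) * τ
      - ctil N C Δt * τ ^ 2 with hD
  have hconj : (starRingEnd ℂ) (Complex.exp (2 * Real.pi * Complex.I * (Y : ℂ)))
      = Complex.exp (-(2 * Real.pi * Complex.I * (Y : ℂ))) := by
    rw [← Complex.exp_conj]
    congr 1
    simp only [map_mul, Complex.conj_I, Complex.conj_ofReal, map_ofNat]
    ring
  rw [hconj, ← Complex.exp_add, ← Complex.exp_add]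
  have hreal : X - Y - ν * t = D + (-((i : ℤ) * k₀) : ℤ) := by
    rw [hX, hY, hD, hν, hτ]
    push_cast
    field_simp
    ring
  have hcast : (X : ℂ) = (D : ℂ) + ((-((i : ℤ) * k₀) : ℤ) : ℂ) + (Y : ℂ) + ((ν * t : ℝ) : ℂ) := by
    have : X = D + ((-((i : ℤ) * k₀) : ℤ) : ℝ) + Y + ν * t := by linarith
    exact_mod_cast this
  rw [hcast]
  rw [show 2 * (Real.pi : ℂ) * Complex.I *
        ((D : ℂ) + ((-((i : ℤ) * k₀) : ℤ) : ℂ) + (Y : ℂ) + ((ν * t : ℝ) : ℂ))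
      + -(2 * (Real.pi : ℂ) * Complex.I * (Y : ℂ))
      + -(2 * (Real.pi : ℂ) * Complex.I * ((ν * t : ℝ) : ℂ))
      = 2 * (Real.pi : ℂ) * Complex.I * (D : ℂ)
        + ((-((i : ℤ) * k₀) : ℤ) : ℂ) * (2 * (Real.pi : ℂ) * Complex.I) from by ring]
  rw [Complex.exp_add, Complex.exp_int_mul_two_pi_mul_I, mul_one]

/-- Cross-ambiguity pulse location: when `τ = k₀·Δt` lies in the `k`-th subchirp window
and `ν = 2·c̃₁·τ − k/Δt + (m − m₁)/T`, the cross-ambiguity integrand is the constant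
`exp(2πi·(c₂·(m² − m₁²) + (m₁/T)·τ − c̃₁·τ²))` on every frequency-aligned sub-interval;
hence the cross-ambiguity function has a pulse at `(τ, 2·c̃₁·τ − k/Δt + δ_f)`, shifted
along the Doppler dimension by exactly the frequency difference `δ_f = (m − m₁)/T`. -/
theorem caf_aligned_integrand_constant
    (N C : ℕ) (hN : 0 < N) (hNeven : Even N) (hC : 0 < C)
    (Δt : ℝ) (hΔt : 0 < Δt) (c₂ : ℝ) (m m₁ k : ℕ) (hm : m < N) (hm₁ : m₁ < N)
    (hmm₁ : m₁ < m) (hk : k < C)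
    (k₀ : ℤ) (τ : ℝ) (hτ : τ = (k₀ : ℝ) * Δt)
    (hτ1 : (k : ℝ) * TSC N C Δt ≤ τ)
    (hτ2 : τ < (k : ℝ) * TSC N C Δt +
      min (TSC N C Δt - tp N C Δt m₁ 1) (tp N C Δt m 1))
    (ν : ℝ) (hν : ν = 2 * ctil N C Δt * τ - (k : ℝ) / Δt + ((m : ℝ) - (m₁ : ℝ)) / T N Δt) :
    (∀ i : ℕ, i ≤ C - k - 1 → ∀ t : ℝ,
        tp N C Δt m₁ i + τ ≤ t → t < tp N C Δt m (i + k + 1) →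
        phi N C Δt c₂ m t * (starRingEnd ℂ) (phi N C Δt c₂ m₁ (t - τ)) *
            Complex.exp (-(2 * Real.pi * Complex.I * ((ν * t : ℝ) : ℂ))) =
          Complex.exp (2 * Real.pi * Complex.I *
            ((c₂ * ((m : ℝ) ^ 2 - (m₁ : ℝ) ^ 2) + ((m₁ : ℝ) / T N Δt) * τ
              - ctil N C Δt * τ ^ 2 : ℝ) : ℂ))) ∧
      (∀ t : ℝ, tp N C Δt m₁ (C - k) + τ ≤ t → t < T N Δt →
        phi N C Δt c₂ m t * (starRingEnd ℂ) (phi N C Δt c₂ m₁ (t - τ)) *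
            Complex.exp (-(2 * Real.pi * Complex.I * ((ν * t : ℝ) : ℂ))) =
          Complex.exp (2 * Real.pi * Complex.I *
            ((c₂ * ((m : ℝ) ^ 2 - (m₁ : ℝ) ^ 2) + ((m₁ : ℝ) / T N Δt) * τ
              - ctil N C Δt * τ ^ 2 : ℝ) : ℂ))) := by
  classical
  have hC' : (0:ℝ) < C := by exact_mod_cast hC
  have hT0 : (0:ℝ) < T N Δt := by
    have hN' : (0:ℝ) < N := by exact_mod_cast hN
    unfold T; positivity
  have hTSC : 0 < TSC N C Δt := by unfold TSC; positivity
  have hmin : 0 < min (TSC N C Δt - tp N C Δt m₁ 1) (tp N C Δt m 1) := by linarith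
  have htpm1 : 0 < tp N C Δt m 1 := lt_of_lt_of_le hmin (min_le_right _ _)
  rw [tp_of N C Δt le_rfl hC m] at htpm1
  have hm0 : 0 ≤ T N Δt / C - (m:ℝ) * Δt / C := by
    have h1 : ((1:ℕ):ℝ) * T N Δt / C = T N Δt / C := by push_cast; ring
    linarith
  have hΔm : (m₁:ℝ) * Δt / C ≤ (m:ℝ) * Δt / C := by
    have h1 : (m₁:ℝ) ≤ m := by exact_mod_cast hmm₁.le
    gcongr
  have hm₁0 : 0 ≤ T N Δt / C - (m₁:ℝ) * Δt / C := by linarith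
  have hτ0 : 0 ≤ τ := le_trans (by positivity) hτ1
  have hτk : (k:ℝ) * T N Δt / C ≤ τ := by
    have : (k:ℝ) * TSC N C Δt = (k:ℝ) * T N Δt / C := by unfold TSC; ring
    linarith
  have h0m : 0 ≤ (m:ℝ) * Δt / C := by positivity
  constructor
  · intro i hi t ht1 ht2
    have hik : i + k + 1 ≤ C := by omega
    have e1 : tp N C Δt m (i + k + 1) = (↑(i + k + 1)) * T N Δt / C - (m:ℝ) * Δt / C :=
      tp_of N C Δt (by omega) hik m
    have e2 : tp N C Δt m₁ (i + 1) = (↑(i + 1)) * T N Δt / C - (m₁:ℝ) * Δt / C :=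
      tp_of N C Δt (by omega) (by omega) m₁
    have htpm₁i : 0 ≤ tp N C Δt m₁ i := tp_nonneg N C Δt hC hT0.le hm₁0 (by omega)
    have A1 : 0 ≤ t := by linarith
    have B1 : 0 ≤ t - τ := by linarith
    have A2 : tp N C Δt m (i + k) ≤ t := by
      rcases Nat.eq_zero_or_pos (i + k) with h0 | h0
      · rw [show i + k = 0 from h0, tp_zero]; linarith
      · rw [tp_of N C Δt h0 (by omega) m]
        rcases Nat.eq_zero_or_pos i with hi0 | hi0
        · subst hi0
          rw [tp_zero] at ht1
          push_cast
          simp only [zero_add] at *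
          linarith
        · rw [tp_of N C Δt hi0 (by omega) m₁] at ht1
          push_cast at ht1 ⊢
          have hd : ((i:ℝ) + k) * T N Δt / C = (i:ℝ) * T N Δt / C + (k:ℝ) * T N Δt / C := by
            ring
          linarith
    have B3 : t - τ < tp N C Δt m₁ (i + 1) := by
      rw [e2]
      rw [e1] at ht2
      push_cast at ht2 ⊢
      have hd : ((i:ℝ) + k + 1) * T N Δt / C
          = ((i:ℝ) + 1) * T N Δt / C + (k:ℝ) * T N Δt / C := by ring
      linarith
    have htT : t < T N Δt :=
      lt_of_lt_of_le ht2 (tp_le_T N C Δt hC hT0.le hΔt.le hik)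
    have hsT : t - τ < T N Δt :=
      lt_of_lt_of_le B3 (tp_le_T N C Δt hC hT0.le hΔt.le (by omega))
    have hqmA : qm N C Δt m t = ((i + k : ℕ) : ℤ) :=
      qm_eq N C Δt hC hT0.le hm0 (by omega) A1 A2 ht2
    have hqmB : qm N C Δt m₁ (t - τ) = ((i : ℕ) : ℤ) :=
      qm_eq N C Δt hC hT0.le hm₁0 (by omega) B1 (by linarith) B3
    have hqmA' : qm N C Δt m t = (i : ℤ) + (k : ℤ) := by rw [hqmA]; push_cast; ring
    exact key N C Δt hΔt c₂ m m₁ i k k₀ τ t ν hτ hν A1 htT B1 hsT hqmA' hqmB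
  · intro t ht1 ht2
    have hck1 : 1 ≤ C - k := by omega
    have e3 : tp N C Δt m₁ (C - k) = (↑(C - k)) * T N Δt / C - (m₁:ℝ) * Δt / C :=
      tp_of N C Δt hck1 (by omega) m₁
    have e4 : tp N C Δt m C = (↑C) * T N Δt / C - (m:ℝ) * Δt / C :=
      tp_of N C Δt (by omega) le_rfl m
    have hsum : ((C - k : ℕ) : ℝ) * T N Δt / C + (k:ℝ) * T N Δt / C
        = (↑C) * T N Δt / C := by
      rw [Nat.cast_sub hk.le]; ring
    have hCT : (↑C) * T N Δt / C = T N Δt := by field_simp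
    have htpm₁i : 0 ≤ tp N C Δt m₁ (C - k) := tp_nonneg N C Δt hC hT0.le hm₁0 (by omega)
    have A1 : 0 ≤ t := by linarith
    have B1 : 0 ≤ t - τ := by linarith
    have A2 : tp N C Δt m C ≤ t := by
      rw [e4]; rw [e3] at ht1; linarith
    have A3 : t < tp N C Δt m (C + 1) := by rw [tp_top]; exact ht2
    have B3 : t - τ < tp N C Δt m₁ (C - k + 1) := by
      rcases Nat.eq_zero_or_pos k with hk0 | hk0
      · rw [show C - k + 1 = C + 1 from by omega, tp_top]; linarith
      · rw [tp_of N C Δt (by omega) (by omega) m₁]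
        have hsum2 : ((C - k + 1 : ℕ) : ℝ) * T N Δt / C
            = (↑C) * T N Δt / C - (k:ℝ) * T N Δt / C + T N Δt / C := by
          push_cast [Nat.cast_sub hk.le]; ring
        push_cast at hsum2 ⊢
        linarith
    have hsT : t - τ < T N Δt := by linarith
    have hqmA : qm N C Δt m t = ((C : ℕ) : ℤ) :=
      qm_eq N C Δt hC hT0.le hm0 le_rfl A1 A2 A3
    have hqmB : qm N C Δt m₁ (t - τ) = ((C - k : ℕ) : ℤ) :=
      qm_eq N C Δt hC hT0.le hm₁0 (by omega) B1 (by linarith) B3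
    have hqmA' : qm N C Δt m t = ((C - k : ℕ) : ℤ) + (k : ℤ) := by rw [hqmA]; omega
    exact key N C Δt hΔt c₂ m m₁ (C - k) k k₀ τ t ν hτ hν A1 ht2 B1 hsT hqmA' hqmB

end AFDM
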